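/- (Theorem 2, asymptotic normality) Suppose √n·τ_{g,n}² → ∞ and log(τ_{g,n}²)/n → 0 for every group g. Let A ⊆ {1,…,p} be the set of coordinates belonging to the true active groups 𝒜 = {g : β⁰_g ≠ 0}. Then the law under μ_n of the rescaled error √n·(β̂_{n,A}^Med − β⁰_A) ∈ ℝ^{|A|} converges weakly (i.e., in distribution) to the product Gaussian measure ⊗_{i∈A} N(0, σ²) as n → ∞. -/

import Mathlib

open MeasureTheory ProbabilityTheory Filter Classical
open Set
open scoped ENNReal

/-- The standard normal cumulative distribution function `Φ`. -/
noncomputable def stdNormalCDF (x : ℝ) : ℝ :=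
  (gaussianReal 0 1 (Set.Iic x)).toReal

/-- The standard normal quantile function `Φ⁻¹`. -/
noncomputable def stdNormalQuantile (p : ℝ) : ℝ :=
  sInf {x : ℝ | p ≤ stdNormalCDF x}


lemma stdNormalCDF_mono : Monotone stdNormalCDF := fun a b hab =>
  ENNReal.toReal_mono (measure_ne_top _ _) (measure_mono (Set.Iic_subset_Iic.mpr hab))

lemma gaussian_singleton (x : ℝ) : gaussianReal 0 1 {x} = 0 :=
  gaussianReal_absolutelyContinuous 0 one_ne_zero (Real.volume_singleton)

lemma stdNormalCDF_lt_one (x : ℝ) : stdNormalCDF x < 1 := by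
  have h1 : gaussianReal 0 1 (Set.Ioi x) ≠ 0 := by
    intro h
    have := gaussianReal_absolutelyContinuous' 0 one_ne_zero h
    simp [Real.volume_Ioi] at this
  have h2 : gaussianReal 0 1 (Set.Iic x) + gaussianReal 0 1 (Set.Ioi x) = 1 := by
    rw [← measure_union (Set.Iic_disjoint_Ioi le_rfl) measurableSet_Ioi, Set.Iic_union_Ioi,
      measure_univ]
  have h3 := congrArg ENNReal.toReal h2
  rw [ENNReal.toReal_add (measure_ne_top _ _) (measure_ne_top _ _)] at h3
  have h4 : 0 < (gaussianReal 0 1 (Set.Ioi x)).toReal :=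
    ENNReal.toReal_pos h1 (measure_ne_top _ _)
  simp only [ENNReal.toReal_one] at h3
  unfold stdNormalCDF
  linarith

lemma stdNormalCDF_zero : stdNormalCDF 0 = 1 / 2 := by
  have hmap : (gaussianReal 0 1).map (fun x : ℝ => (-1) * x) = gaussianReal 0 1 := by
    rw [gaussianReal_map_const_mul (-1)]
    congr 1
    · norm_num
    · ext
      norm_num
  have hIci : gaussianReal 0 1 (Set.Ici 0) = gaussianReal 0 1 (Set.Iic 0) := by
    conv_rhs => rw [← hmap]
    rw [Measure.map_apply (measurable_const_mul _) measurableSet_Iic]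
    congr 1
    ext t
    simp only [Set.mem_Ici, Set.mem_preimage, Set.mem_Iic]
    constructor <;> intro h <;> nlinarith
  have h2 : gaussianReal 0 1 (Set.Iic 0) + gaussianReal 0 1 (Set.Ici 0) = 1 + gaussianReal 0 1 {0} := by
    rw [← measure_union_add_inter₀ (Set.Iic 0) (measurableSet_Ici).nullMeasurableSet]
    rw [Set.Iic_union_Ici, measure_univ]
    congr 1
    rw [Set.Iic_inter_Ici]
    norm_num
  rw [gaussian_singleton, add_zero, hIci] at h2
  have h3 := congrArg ENNReal.toReal h2
  rw [ENNReal.toReal_add (measure_ne_top _ _) (measure_ne_top _ _)] at h3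
  simp only [ENNReal.toReal_one] at h3
  unfold stdNormalCDF
  linarith

lemma half_lt_stdNormalCDF {ε : ℝ} (hε : 0 < ε) : 1 / 2 < stdNormalCDF ε := by
  have h1 : gaussianReal 0 1 (Set.Ioc 0 ε) ≠ 0 := by
    intro h
    have := gaussianReal_absolutelyContinuous' 0 one_ne_zero h
    rw [Real.volume_Ioc] at this
    simp only [ENNReal.ofReal_eq_zero] at this
    linarith
  have h2 : gaussianReal 0 1 (Set.Iic ε) = gaussianReal 0 1 (Set.Iic 0) + gaussianReal 0 1 (Set.Ioc 0 ε) := by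
    rw [← measure_union (Set.Iic_disjoint_Ioc le_rfl) measurableSet_Ioc, Set.Iic_union_Ioc_eq_Iic hε.le]
  have h3 := congrArg ENNReal.toReal h2
  rw [ENNReal.toReal_add (measure_ne_top _ _) (measure_ne_top _ _)] at h3
  have h4 : 0 < (gaussianReal 0 1 (Set.Ioc 0 ε)).toReal :=
    ENNReal.toReal_pos h1 (measure_ne_top _ _)
  have h0 : stdNormalCDF 0 = 1/2 := stdNormalCDF_zero
  unfold stdNormalCDF at *
  linarith

lemma stdNormalCDF_tendsto_atTop : Tendsto stdNormalCDF atTop (nhds 1) := by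
  have h := tendsto_measure_Iic_atTop (gaussianReal 0 1)
  rw [measure_univ] at h
  have := (ENNReal.tendsto_toReal (by norm_num : (1:ℝ≥0∞) ≠ ⊤)).comp h
  show Tendsto (fun x => (gaussianReal 0 1 (Set.Iic x)).toReal) atTop (nhds 1)
  simpa [stdNormalCDF, Function.comp_def] using this

lemma exists_le_stdNormalCDF {p : ℝ} (hp : p < 1) : ∃ x, p ≤ stdNormalCDF x :=
  (stdNormalCDF_tendsto_atTop.eventually_const_le hp).exists

lemma exists_stdNormalCDF_lt {p : ℝ} (hp : 0 < p) : ∃ x, stdNormalCDF x < p := by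
  have h := tendsto_measure_Ici_atBot (gaussianReal 0 1)
  rw [measure_univ] at h
  have h2 := (ENNReal.tendsto_toReal (by norm_num : (1:ℝ≥0∞) ≠ ⊤)).comp h
  simp only [ENNReal.toReal_one, Function.comp_def] at h2
  have h3 : ∀ᶠ x : ℝ in atBot, 1 - p < (gaussianReal 0 1 (Set.Ici x)).toReal :=
    h2.eventually_const_lt (by linarith)
  obtain ⟨x, hx⟩ := h3.exists
  refine ⟨x - 1, ?_⟩
  have hsub : Set.Iic (x - 1) ∪ Set.Ici x ⊆ Set.univ := Set.subset_univ _
  have hdisj : Disjoint (Set.Iic (x - 1)) (Set.Ici x) := by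
    apply Set.Iic_disjoint_Ici.mpr; linarith
  have hle : gaussianReal 0 1 (Set.Iic (x-1)) + gaussianReal 0 1 (Set.Ici x) ≤ 1 := by
    rw [← measure_union hdisj measurableSet_Ici]
    rw [← measure_univ (μ := gaussianReal 0 1)]
    exact measure_mono hsub
  have hle2 : (gaussianReal 0 1 (Set.Iic (x-1))).toReal + (gaussianReal 0 1 (Set.Ici x)).toReal ≤ 1 := by
    rw [← ENNReal.toReal_add (measure_ne_top _ _) (measure_ne_top _ _)]
    rw [show (1:ℝ) = (1:ℝ≥0∞).toReal by simp]
    exact ENNReal.toReal_mono (by norm_num) hle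
  unfold stdNormalCDF
  linarith

lemma stdNormalQuantile_nonneg {p : ℝ} (hp : 1 / 2 < p) : 0 ≤ stdNormalQuantile p :=
  Real.sInf_nonneg fun x hx => by
    by_contra h
    push_neg at h
    have h2 : stdNormalCDF x ≤ 1 / 2 := stdNormalCDF_zero ▸ stdNormalCDF_mono h.le
    have h3 : p ≤ stdNormalCDF x := hx
    linarith

lemma stdNormalQuantile_le {p ε : ℝ} (hp : 1 / 2 < p) (h : p ≤ stdNormalCDF ε) :
    stdNormalQuantile p ≤ ε := by
  unfold stdNormalQuantile
  refine csInf_le ⟨0, fun x hx => ?_⟩ (show ε ∈ {x : ℝ | p ≤ stdNormalCDF x} from h)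
  by_contra hc
  push_neg at hc
  have h2 : stdNormalCDF x ≤ 1 / 2 := stdNormalCDF_zero ▸ stdNormalCDF_mono hc.le
  have h3 : p ≤ stdNormalCDF x := hx
  linarith

lemma stdNormalQuantile_mono_on {p q : ℝ} (hp : 0 < p) (hpq : p ≤ q) (hq : q < 1) :
    stdNormalQuantile p ≤ stdNormalQuantile q := by
  obtain ⟨x₀, hx₀⟩ := exists_stdNormalCDF_lt hp
  apply csInf_le_csInf
  · refine ⟨x₀, fun x hx => ?_⟩
    by_contra hc
    push_neg at hc
    have : stdNormalCDF x ≤ stdNormalCDF x₀ := stdNormalCDF_mono hc.le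
    have h3 : p ≤ stdNormalCDF x := hx
    linarith
  · exact exists_le_stdNormalCDF hq
  · exact fun x hx => le_trans hpq hx

lemma stdNormalQuantile_one : stdNormalQuantile 1 = 0 := by
  unfold stdNormalQuantile
  convert Real.sInf_empty using 2
  ext x
  simp only [Set.mem_setOf_eq, Set.mem_empty_iff_false, iff_false, not_le]
  exact stdNormalCDF_lt_one x

lemma measurable_quantile_comp :
    Measurable (fun t : ℝ => stdNormalQuantile (1 / (2 * (1 - min (1 / 2) t)))) := by
  set u : ℝ → ℝ := fun t => 1 / (2 * (1 - min (1 / 2) t)) with hu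
  set H : ℝ → ℝ := fun t => stdNormalQuantile (u t) with hHdef
  show Measurable H
  have hden : ∀ t : ℝ, 0 < 2 * (1 - min (1 / 2) t) := by
    intro t
    have : min (1 / 2 : ℝ) t ≤ 1 / 2 := min_le_left _ _
    linarith
  have hu_pos : ∀ t : ℝ, 0 < u t := fun t => by
    simp only [hu]
    exact one_div_pos.mpr (hden t)
  have hu_lt_one : ∀ t : ℝ, t < 1 / 2 → u t < 1 := by
    intro t ht
    rw [hu]
    simp only
    rw [min_eq_right ht.le, div_lt_one (by linarith)]
    linarith
  have hu_mono : ∀ s t : ℝ, s ≤ t → u s ≤ u t := by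
    intro s t hst
    simp only [hu]
    have hm : min (1 / 2 : ℝ) s ≤ min (1 / 2 : ℝ) t := min_le_min le_rfl hst
    exact one_div_le_one_div_of_le (hden t) (by linarith)
  have hmonoH : ∀ s t : ℝ, s ≤ t → t < 1 / 2 → H s ≤ H t := fun s t hst ht =>
    stdNormalQuantile_mono_on (hu_pos s) (hu_mono s t hst) (hu_lt_one t ht)
  have hH_const : ∀ t : ℝ, 1 / 2 ≤ t → H t = 0 := by
    intro t ht
    have : u t = 1 := by
      rw [hu]
      simp only [min_eq_left ht]
      norm_num
    rw [hHdef]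
    simp only [this]
    exact stdNormalQuantile_one
  apply measurable_of_Iio
  intro a
  have hsplit : H ⁻¹' (Iio a) =
      {t : ℝ | t < 1 / 2 ∧ H t < a} ∪ {t : ℝ | 1 / 2 ≤ t ∧ H t < a} := by
    ext t
    simp only [Set.mem_preimage, Set.mem_Iio, Set.mem_union, Set.mem_setOf_eq]
    rcases lt_or_ge t (1 / 2) with h | h
    · tauto
    · tauto
  rw [hsplit]
  apply MeasurableSet.union
  · have hoc : OrdConnected {t : ℝ | t < 1 / 2 ∧ H t < a} := by
      refine ⟨fun x hx y hy z hz => ?_⟩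
      have hzy : z ≤ y := hz.2
      exact ⟨lt_of_le_of_lt hzy hy.1, lt_of_le_of_lt (hmonoH z y hzy hy.1) hy.2⟩
    exact hoc.measurableSet
  · rcases lt_or_ge 0 a with ha | ha
    · have : {t : ℝ | 1 / 2 ≤ t ∧ H t < a} = Set.Ici (1 / 2 : ℝ) := by
        ext t
        simp only [Set.mem_setOf_eq, Set.mem_Ici, and_iff_left_iff_imp]
        intro ht
        rw [hH_const t ht]
        exact ha
      rw [this]; exact measurableSet_Ici
    · have : {t : ℝ | 1 / 2 ≤ t ∧ H t < a} = ∅ := by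
        ext t
        simp only [Set.mem_setOf_eq, Set.mem_empty_iff_false, iff_false, not_and, not_lt]
        intro ht
        rw [hH_const t ht]
        exact ha
      rw [this]; exact MeasurableSet.empty

lemma tendsto_stdNormalQuantile_of {q : ℕ → ℝ} (h1 : ∀ n, 1 / 2 < q n)
    (h2 : Tendsto q atTop (nhds (1 / 2))) :
    Tendsto (fun n => stdNormalQuantile (q n)) atTop (nhds 0) := by
  apply tendsto_order.2
  constructor
  · intro a ha
    exact Eventually.of_forall fun n => lt_of_lt_of_le ha (stdNormalQuantile_nonneg (h1 n))
  · intro a ha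
    have hφ : 1 / 2 < stdNormalCDF (a / 2) := half_lt_stdNormalCDF (by linarith)
    filter_upwards [h2.eventually_lt_const hφ] with n hn
    calc stdNormalQuantile (q n) ≤ a / 2 := stdNormalQuantile_le (h1 n) hn.le
    _ < a := by linarith

lemma abs_max_sub_le {a t : ℝ} (ha : 0 ≤ a) : |max (a - t) 0 - a| ≤ |t| := by
  rcases le_total (a - t) 0 with h | h
  · rw [max_eq_right h, zero_sub, abs_neg, abs_of_nonneg ha]
    calc a ≤ t := by linarith
    _ ≤ |t| := le_abs_self t
  · rw [max_eq_left h, show a - t - a = -t by ring, abs_neg]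

lemma sign_thresh_bound (x B T : ℝ) (hB0 : 0 ≤ B) (hB1 : B ≤ 1) :
    |Real.sign x * max ((1 - B) * |x| - T) 0 - x| ≤ B * |x| + |T| := by
  set a : ℝ := (1 - B) * |x| with ha
  have ham : 0 ≤ a := mul_nonneg (by linarith) (abs_nonneg _)
  have h2 : abs (max (a - T) 0 - a) ≤ |T| := abs_max_sub_le ham
  have h3 : abs (a - |x|) = B * |x| := by
    rw [ha, show (1 - B) * |x| - |x| = -(B * |x|) by ring, abs_neg,
      abs_of_nonneg (mul_nonneg hB0 (abs_nonneg _))]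
  have h4 : abs (max (a - T) 0 - |x|) ≤ B * |x| + |T| := by
    calc abs (max (a - T) 0 - |x|)
        ≤ abs (max (a - T) 0 - a) + abs (a - |x|) := abs_sub_le _ _ _
    _ ≤ |T| + B * |x| := add_le_add h2 (le_of_eq h3)
    _ = B * |x| + |T| := by ring
  rcases lt_trichotomy x 0 with hx | hx | hx
  · rw [Real.sign_of_neg hx]
    have hax : |x| = -x := abs_of_neg hx
    rw [hax] at h4
    rw [show (-1 : ℝ) * max (a - T) 0 - x = -(max (a - T) 0 - -x) by ring, abs_neg, hax]
    exact h4
  · subst hx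
    simp only [Real.sign_zero, zero_mul, zero_sub, abs_neg, abs_zero, mul_zero, zero_add]
    exact abs_nonneg T
  · rw [Real.sign_of_pos hx, one_mul]
    have hax : |x| = x := abs_of_pos hx
    rw [hax] at h4 ⊢
    exact h4

lemma real_sign_mem : ∀ x : ℝ, Real.sign x = -1 ∨ Real.sign x = 0 ∨ Real.sign x = 1 := by
  intro x
  rcases lt_trichotomy x 0 with h | h | h
  · left; exact Real.sign_of_neg h
  · right; left; rw [h]; exact Real.sign_zero
  · right; right; exact Real.sign_of_pos h

lemma monotone_real_sign : Monotone Real.sign := by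
  intro a b hab
  rcases lt_trichotomy a 0 with ha | ha | ha
  · rw [Real.sign_of_neg ha]
    rcases real_sign_mem b with h | h | h <;> rw [h] <;> norm_num
  · rw [ha, Real.sign_zero]
    rcases lt_or_eq_of_le (ha ▸ hab) with hb | hb
    · rw [Real.sign_of_pos hb]; norm_num
    · rw [← hb, Real.sign_zero]
  · rw [Real.sign_of_pos ha, Real.sign_of_pos (lt_of_lt_of_le ha hab)]

/-- **Theorem 2, asymptotic normality of median thresholding.**
In the orthogonal-design Gaussian sampling model `μ_n = ⊗_i N(β⁰_i, σ²/n)`, with the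
median thresholding estimator `β̂^Med` defined from the spike-and-slab posterior
(shrinkage `B_{g,n}`, spike probability `l_{g,n}`, threshold
`Q_{g,n} = Φ⁻¹(1/(2(1 - min(1/2, l_{g,n}))))`, estimator set to `0` for group `g`
when `l_{g,n} ≥ 1/2`), if `√n τ_{g,n}² → ∞` and `log(τ_{g,n}²)/n → 0` for every
group `g`, then the law under `μ_n` of `√n (β̂^Med_{n,A} - β⁰_A)`, where `A` is the
set of coordinates in the true active groups, converges weakly to `⊗_{i ∈ A} N(0, σ²)`:
for every bounded continuous test function `φ`, the expectations converge. -/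
theorem median_thresholding_asymptotic_normality
    (p G : ℕ) (gr : Fin p → Fin G) (hgr : Function.Surjective gr)
    (β0 : Fin p → ℝ) (σ : ℝ) (hσ : 0 < σ)
    (π₀ : ℝ) (hπ₀ : 0 < π₀) (hπ₁ : π₀ < 1)
    (τ2 : Fin G → ℕ → ℝ) (hτ2 : ∀ g n, 0 < τ2 g n)
    (hτlim : ∀ g, Tendsto (fun n : ℕ => Real.sqrt (n : ℝ) * τ2 g n) atTop atTop)
    (hτlog : ∀ g, Tendsto (fun n : ℕ => Real.log (τ2 g n) / (n : ℝ)) atTop (nhds 0))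
    (μ : ℕ → Measure (Fin p → ℝ))
    (hμ : ∀ n, μ n =
      Measure.pi (fun i : Fin p => gaussianReal (β0 i) (Real.toNNReal (σ ^ 2 / n))))
    (bnorm : Fin G → (Fin p → ℝ) → ℝ)
    (hbnorm : ∀ g x, bnorm g x =
      Real.sqrt (∑ i ∈ Finset.univ.filter (fun i => gr i = g), x i ^ 2))
    (B : Fin G → ℕ → ℝ)
    (hB : ∀ g n, B g n = 1 / (1 + (n : ℝ) * τ2 g n))
    (l : Fin G → ℕ → (Fin p → ℝ) → ℝ)
    (hl : ∀ g n x, l g n x = π₀ /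
      (π₀ + (1 - π₀) *
        (1 + (n : ℝ) * τ2 g n) ^
          (-((Finset.univ.filter (fun i => gr i = g)).card : ℝ) / 2) *
        Real.exp ((1 - B g n) * (n : ℝ) * bnorm g x ^ 2 / (2 * σ ^ 2))))
    (Q : Fin G → ℕ → (Fin p → ℝ) → ℝ)
    (hQ : ∀ g n x, Q g n x =
      stdNormalQuantile (1 / (2 * (1 - min (1 / 2) (l g n x)))))
    (med : ℕ → (Fin p → ℝ) → (Fin p → ℝ))
    (hmed : ∀ n x i, med n x i =
      if 1 / 2 ≤ l (gr i) n x then 0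
      else Real.sign (x i) *
        max ((1 - B (gr i) n) * |x i| -
          σ / Real.sqrt (n : ℝ) * Q (gr i) n x * Real.sqrt (1 - B (gr i) n)) 0) :
    ∀ φ : BoundedContinuousFunction
        ({i : Fin p // ∃ i', gr i' = gr i ∧ β0 i' ≠ 0} → ℝ) ℝ,
      Tendsto
        (fun n => ∫ x,
          φ (fun i => Real.sqrt (n : ℝ) * (med n x i.1 - β0 i.1)) ∂(μ n))
        atTop
        (nhds (∫ y, φ y ∂(Measure.pi
          (fun _ : {i : Fin p // ∃ i', gr i' = gr i ∧ β0 i' ≠ 0} =>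
            gaussianReal 0 ⟨σ ^ 2, sq_nonneg σ⟩)))) := by
  intro φ
  classical
  set v : NNReal := ⟨σ ^ 2, sq_nonneg σ⟩ with hv
  set ν : Measure (Fin p → ℝ) := Measure.pi (fun _ : Fin p => gaussianReal 0 v) with hν
  haveI hprob : IsProbabilityMeasure ν := by rw [hν]; infer_instance
  set c : ℕ → ℝ := fun n => (Real.sqrt n)⁻¹ with hc
  set X : ℕ → (Fin p → ℝ) → (Fin p → ℝ) := fun n y j => β0 j + c n * y j with hX
  have hone : ∀ (g : Fin G) (n : ℕ), (0:ℝ) < 1 + (n : ℝ) * τ2 g n := fun g n => by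
    have h1 : (0:ℝ) ≤ (n:ℝ) * τ2 g n := mul_nonneg (Nat.cast_nonneg n) (hτ2 g n).le
    linarith
  have hBpos : ∀ (g : Fin G) (n : ℕ), 0 < B g n := fun g n => by
    rw [hB]
    exact div_pos one_pos (hone g n)
  have hBle : ∀ (g : Fin G) (n : ℕ), B g n ≤ 1 := fun g n => by
    rw [hB, div_le_one (hone g n)]
    nlinarith [mul_nonneg (Nat.cast_nonneg n : (0:ℝ) ≤ (n:ℝ)) (hτ2 g n).le]
  have hbncont : ∀ g : Fin G, Continuous (bnorm g) := by
    intro g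
    have : bnorm g = fun x => Real.sqrt (∑ i ∈ Finset.univ.filter (fun i => gr i = g), x i ^ 2) :=
      funext (hbnorm g)
    rw [this]
    exact Real.continuous_sqrt.comp (continuous_finset_sum _ fun j _ => (continuous_apply j).pow 2)
  have hdenpos : ∀ (g : Fin G) (n : ℕ) (x : Fin p → ℝ),
      0 < π₀ + (1 - π₀) *
        (1 + (n : ℝ) * τ2 g n) ^
          (-((Finset.univ.filter (fun i => gr i = g)).card : ℝ) / 2) *
        Real.exp ((1 - B g n) * (n : ℝ) * bnorm g x ^ 2 / (2 * σ ^ 2)) := by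
    intro g n x
    have h1 : 0 < (1 + (n : ℝ) * τ2 g n) ^
        (-((Finset.univ.filter (fun i => gr i = g)).card : ℝ) / 2) :=
      Real.rpow_pos_of_pos (hone g n) _
    have h2 : 0 < Real.exp ((1 - B g n) * (n : ℝ) * bnorm g x ^ 2 / (2 * σ ^ 2)) :=
      Real.exp_pos _
    have h3 : 0 < (1 - π₀) * (1 + (n : ℝ) * τ2 g n) ^
          (-((Finset.univ.filter (fun i => gr i = g)).card : ℝ) / 2) *
        Real.exp ((1 - B g n) * (n : ℝ) * bnorm g x ^ 2 / (2 * σ ^ 2)) :=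
      mul_pos (mul_pos (by linarith) h1) h2
    linarith
  have hlcont : ∀ (g : Fin G) (n : ℕ), Continuous (l g n) := by
    intro g n
    have hfe : l g n = fun x => π₀ /
      (π₀ + (1 - π₀) *
        (1 + (n : ℝ) * τ2 g n) ^
          (-((Finset.univ.filter (fun i => gr i = g)).card : ℝ) / 2) *
        Real.exp ((1 - B g n) * (n : ℝ) * bnorm g x ^ 2 / (2 * σ ^ 2))) := funext (hl g n)
    rw [hfe]
    apply continuous_const.div
    · apply continuous_const.add
      exact continuous_const.mul (Real.continuous_exp.comp
        ((continuous_const.mul ((hbncont g).pow 2)).div_const _))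
    · exact fun x => (hdenpos g n x).ne'
  have hlpos : ∀ (g : Fin G) (n : ℕ) (x : Fin p → ℝ), 0 < l g n x := by
    intro g n x
    rw [hl]
    exact div_pos hπ₀ (hdenpos g n x)
  have hQmeas : ∀ (g : Fin G) (n : ℕ), Measurable (Q g n) := by
    intro g n
    have hfe : Q g n = (fun t : ℝ => stdNormalQuantile (1 / (2 * (1 - min (1 / 2) t)))) ∘ l g n :=
      funext fun x => hQ g n x
    rw [hfe]
    exact measurable_quantile_comp.comp (hlcont g n).measurable
  have hmedmeas : ∀ (n : ℕ) (i : Fin p), Measurable (fun x => med n x i) := by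
    intro n i
    have hfe : (fun x => med n x i) = fun x =>
      if 1 / 2 ≤ l (gr i) n x then 0
      else Real.sign (x i) *
        max ((1 - B (gr i) n) * |x i| -
          σ / Real.sqrt (n : ℝ) * Q (gr i) n x * Real.sqrt (1 - B (gr i) n)) 0 :=
      funext fun x => hmed n x i
    rw [hfe]
    refine Measurable.ite (measurableSet_le measurable_const (hlcont (gr i) n).measurable)
      measurable_const ?_
    refine Measurable.mul (monotone_real_sign.measurable.comp (measurable_pi_apply i)) ?_
    refine Measurable.max ?_ measurable_const
    exact ((measurable_pi_apply i).abs.const_mul _).sub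
      (((hQmeas (gr i) n).const_mul _).mul_const _)
  have hchg : ∀ k : ℕ,
      (∫ x, φ (fun i : {i : Fin p // ∃ i', gr i' = gr i ∧ β0 i' ≠ 0} =>
          Real.sqrt ((k+1 : ℕ) : ℝ) * (med (k+1) x i.1 - β0 i.1)) ∂(μ (k+1)))
      = ∫ y, φ (fun i : {i : Fin p // ∃ i', gr i' = gr i ∧ β0 i' ≠ 0} =>
          Real.sqrt ((k+1 : ℕ) : ℝ) * (med (k+1) (X (k+1) y) i.1 - β0 i.1)) ∂ν := by
    intro k
    have hkpos : (0:ℝ) < ((k+1 : ℕ) : ℝ) := by positivity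
    have hs : 0 < Real.sqrt ((k+1 : ℕ) : ℝ) := Real.sqrt_pos.2 hkpos
    have hcne : c (k+1) ≠ 0 := by
      rw [hc]
      exact inv_ne_zero hs.ne'
    set e : (Fin p → ℝ) ≃ᵐ (Fin p → ℝ) := MeasurableEquiv.piCongrRight (fun j =>
      ((Homeomorph.mulLeft₀ (c (k+1)) hcne).trans
        (Homeomorph.addLeft (β0 j))).toMeasurableEquiv) with he
    have hee : ⇑e = X (k+1) := by
      rw [hX]
      funext y
      rfl
    have hcoord : ∀ j : Fin p, MeasurePreserving (fun t : ℝ => β0 j + c (k+1) * t)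
        (gaussianReal 0 v) (gaussianReal (β0 j) (Real.toNNReal (σ ^ 2 / ((k+1:ℕ):ℝ)))) := by
      intro j
      constructor
      · exact (measurable_id.const_mul _).const_add _
      · have hcomp : (fun t : ℝ => β0 j + c (k+1) * t)
            = (fun z : ℝ => z + β0 j) ∘ (fun t : ℝ => c (k+1) * t) := by
          funext t
          simp [add_comm]
        rw [hcomp, ← Measure.map_map (measurable_add_const _) (measurable_const_mul _),
          gaussianReal_map_const_mul, gaussianReal_map_add_const]
        congr 1
        · simp
        · ext
          rw [NNReal.coe_mul, Real.coe_toNNReal _ (by positivity)]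
          show (c (k+1))^2 * ((v : NNReal) : ℝ) = σ^2 / ((k+1:ℕ):ℝ)
          rw [hv, hc]
          simp only [NNReal.coe_mk]
          rw [inv_pow, Real.sq_sqrt hkpos.le]
          field_simp
          rfl
    have hmp : MeasurePreserving (X (k+1)) ν (μ (k+1)) := by
      rw [hμ, hν, hX]
      exact measurePreserving_pi _ _ hcoord
    have hemb : MeasurableEmbedding (X (k+1)) := hee ▸ e.measurableEmbedding
    exact (hmp.integral_comp hemb _).symm
  have hlim_pt : ∀ (y : Fin p → ℝ) (i : {i : Fin p // ∃ i', gr i' = gr i ∧ β0 i' ≠ 0}),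
      Tendsto (fun k : ℕ =>
        Real.sqrt ((k+1 : ℕ) : ℝ) * (med (k+1) (X (k+1) y) i.1 - β0 i.1)) atTop
        (nhds (y i.1)) := by
    intro y i
    obtain ⟨i', hgi', hbi'⟩ := i.2
    set g : Fin G := gr i.1 with hg
    have hnrpos : ∀ k : ℕ, (0:ℝ) < ((k+1:ℕ):ℝ) := fun k => by positivity
    have hsqpos : ∀ k : ℕ, 0 < Real.sqrt ((k+1:ℕ):ℝ) := fun k => Real.sqrt_pos.2 (hnrpos k)
    have hsqsq : ∀ k : ℕ, Real.sqrt ((k+1:ℕ):ℝ) * Real.sqrt ((k+1:ℕ):ℝ) = ((k+1:ℕ):ℝ) :=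
      fun k => Real.mul_self_sqrt (hnrpos k).le
    have hsq1 : ∀ k : ℕ, (1:ℝ) ≤ Real.sqrt ((k+1:ℕ):ℝ) := fun k => by
      rw [show (1:ℝ) = Real.sqrt 1 by simp]
      exact Real.sqrt_le_sqrt (by exact_mod_cast Nat.one_le_iff_ne_zero.2 (Nat.succ_ne_zero k))
    have hsqatTop : Tendsto (fun k : ℕ => Real.sqrt ((k+1:ℕ):ℝ)) atTop atTop := by
      apply tendsto_atTop_atTop.2
      intro b
      obtain ⟨N, hN⟩ := exists_nat_ge (b^2)
      refine ⟨N, fun k hk => ?_⟩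
      have h1 : (b^2 : ℝ) ≤ ((k+1:ℕ):ℝ) := le_trans hN
        (by exact_mod_cast Nat.le_succ_of_le hk)
      calc b ≤ |b| := le_abs_self b
      _ = Real.sqrt (b^2) := (Real.sqrt_sq_eq_abs b).symm
      _ ≤ _ := Real.sqrt_le_sqrt h1
    have ht1 : Tendsto (fun k : ℕ => Real.sqrt ((k+1:ℕ):ℝ) * τ2 g (k+1)) atTop atTop :=
      (hτlim g).comp (tendsto_add_atTop_nat 1)
    have hnt : Tendsto (fun k : ℕ => ((k+1:ℕ):ℝ) * τ2 g (k+1)) atTop atTop := by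
      apply tendsto_atTop_mono' atTop _ ht1
      filter_upwards with k
      have h1 : Real.sqrt ((k+1:ℕ):ℝ) ≤ Real.sqrt ((k+1:ℕ):ℝ) * Real.sqrt ((k+1:ℕ):ℝ) :=
        le_mul_of_one_le_left (hsqpos k).le (hsq1 k)
      have h2 := mul_le_mul_of_nonneg_right h1 (hτ2 g (k+1)).le
      rwa [hsqsq k] at h2
    have hBten : Tendsto (fun k : ℕ => B g (k+1)) atTop (nhds 0) := by
      have h1 : Tendsto (fun k : ℕ => 1 + ((k+1:ℕ):ℝ) * τ2 g (k+1)) atTop atTop :=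
        tendsto_atTop_add_const_left _ 1 hnt
      exact (tendsto_inv_atTop_zero.comp h1).congr fun k => by
        rw [hB, one_div]
        rfl
    have hsB : Tendsto (fun k : ℕ => Real.sqrt ((k+1:ℕ):ℝ) * B g (k+1)) atTop (nhds 0) := by
      have hub : Tendsto (fun k : ℕ => (Real.sqrt ((k+1:ℕ):ℝ) * τ2 g (k+1))⁻¹) atTop (nhds 0) :=
        tendsto_inv_atTop_zero.comp ht1
      apply squeeze_zero (fun k => mul_nonneg (Real.sqrt_nonneg _) (hBpos g (k+1)).le) _ hub
      intro k
      have h2 : (0:ℝ) < 1 + ((k+1:ℕ):ℝ) * τ2 g (k+1) := hone g (k+1)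
      have h3 : 0 < Real.sqrt ((k+1:ℕ):ℝ) * τ2 g (k+1) := mul_pos (hsqpos k) (hτ2 g (k+1))
      rw [hB, mul_one_div, div_le_iff₀ h2, inv_mul_eq_div, le_div_iff₀ h3, ← mul_assoc, hsqsq k]
      linarith
    have hcX : ∀ j : Fin p, Tendsto (fun k : ℕ => X (k+1) y j) atTop (nhds (β0 j)) := by
      intro j
      have h1 : Tendsto (fun k : ℕ => (Real.sqrt ((k+1:ℕ):ℝ))⁻¹) atTop (nhds 0) :=
        tendsto_inv_atTop_zero.comp hsqatTop
      have h2 := (tendsto_const_nhds : Tendsto (fun _ : ℕ => β0 j) atTop (nhds (β0 j))).add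
        (h1.mul_const (y j))
      rw [zero_mul, add_zero] at h2
      exact h2.congr fun k => by simp only [hX, hc]
    have hbn2 : ∀ x : Fin p → ℝ, bnorm g x ^ 2
        = ∑ j ∈ Finset.univ.filter (fun j => gr j = g), x j ^ 2 := by
      intro x
      rw [hbnorm]
      exact Real.sq_sqrt (Finset.sum_nonneg fun j _ => sq_nonneg _)
    have hSlim : Tendsto (fun k : ℕ => bnorm g (X (k+1) y) ^ 2) atTop
        (nhds (∑ j ∈ Finset.univ.filter (fun j => gr j = g), β0 j ^ 2)) := by
      have h1 := tendsto_finset_sum (Finset.univ.filter (fun j : Fin p => gr j = g))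
        (fun (j : Fin p) (_ : j ∈ Finset.univ.filter (fun j : Fin p => gr j = g)) =>
          (hcX j).pow 2)
      exact h1.congr fun k => (hbn2 _).symm
    have hcpos : 0 < ∑ j ∈ Finset.univ.filter (fun j => gr j = g), β0 j ^ 2 := by
      apply Finset.sum_pos' (fun j _ => sq_nonneg _)
      refine ⟨i', Finset.mem_filter.2 ⟨Finset.mem_univ _, by rw [hg]; exact hgi'⟩, ?_⟩
      exact pow_two_pos_of_ne_zero hbi'
    set S : ℝ := ∑ j ∈ Finset.univ.filter (fun j => gr j = g), β0 j ^ 2 with hS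
    set md : ℝ := -((Finset.univ.filter (fun j : Fin p => gr j = g)).card : ℝ) / 2 with hmd
    set Dk : ℕ → ℝ := fun k => (1 - π₀) * (1 + ((k+1:ℕ):ℝ) * τ2 g (k+1)) ^ md *
        Real.exp ((1 - B g (k+1)) * ((k+1:ℕ):ℝ) * bnorm g (X (k+1) y) ^ 2 / (2 * σ ^ 2)) with hDk
    have hDpos : ∀ k, 0 < Dk k := by
      intro k
      simp only [hDk]
      exact mul_pos (mul_pos (by linarith)
        (Real.rpow_pos_of_pos (hone g (k+1)) md)) (Real.exp_pos _)
    have hlogD : ∀ k, Real.log (Dk k) = Real.log (1 - π₀)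
        + md * Real.log (1 + ((k+1:ℕ):ℝ) * τ2 g (k+1))
        + (1 - B g (k+1)) * ((k+1:ℕ):ℝ) * bnorm g (X (k+1) y) ^ 2 / (2 * σ ^ 2) := by
      intro k
      simp only [hDk]
      rw [Real.log_mul (mul_ne_zero (ne_of_gt (by linarith))
          (Real.rpow_pos_of_pos (hone g (k+1)) md).ne') (Real.exp_ne_zero _),
        Real.log_mul (ne_of_gt (by linarith)) (Real.rpow_pos_of_pos (hone g (k+1)) md).ne',
        Real.log_rpow (hone g (k+1)), Real.log_exp]
    have hlogn : Tendsto (fun k : ℕ => Real.log (1 + ((k+1:ℕ):ℝ) * τ2 g (k+1)) / ((k+1:ℕ):ℝ))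
        atTop (nhds 0) := by
      have hb1 : Tendsto (fun k : ℕ => Real.log (1 + ((k+1:ℕ):ℝ)) / ((k+1:ℕ):ℝ))
          atTop (nhds 0) := by
        have hcomp := Real.isLittleO_log_id_atTop.tendsto_div_nhds_zero.comp
          (tendsto_atTop_add_const_left atTop (1:ℝ)
            (tendsto_natCast_atTop_atTop.comp (tendsto_add_atTop_nat 1)))
        have hfrac : Tendsto (fun k : ℕ => (1 + ((k+1:ℕ):ℝ)) / ((k+1:ℕ):ℝ)) atTop (nhds 1) := by
          have h1 : Tendsto (fun k : ℕ => 1 / ((k+1:ℕ):ℝ) + 1) atTop (nhds (0 + 1)) :=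
            Tendsto.add_const 1 (tendsto_one_div_atTop_nhds_zero_nat.comp (tendsto_add_atTop_nat 1))
          rw [zero_add] at h1
          refine h1.congr fun k => ?_
          field_simp
        have h2 := hcomp.mul hfrac
        rw [zero_mul] at h2
        refine h2.congr fun k => ?_
        simp only [Function.comp, id_eq]
        have hne : ((k+1:ℕ):ℝ) ≠ 0 := (hnrpos k).ne'
        have hne2 : (1:ℝ) + ((k+1:ℕ):ℝ) ≠ 0 := by positivity
        field_simp
      have hb2 : Tendsto (fun k : ℕ => |Real.log (τ2 g (k+1))| / ((k+1:ℕ):ℝ))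
          atTop (nhds 0) := by
        have h1 := ((hτlog g).comp (tendsto_add_atTop_nat 1)).abs
        rw [abs_zero] at h1
        refine h1.congr fun k => ?_
        simp only [Function.comp]
        rw [abs_div, abs_of_pos (hnrpos k)]
      have hsum := hb1.add hb2
      rw [add_zero] at hsum
      refine squeeze_zero (fun k => ?_) (fun k => ?_) hsum
      · refine div_nonneg (Real.log_nonneg ?_) (hnrpos k).le
        nlinarith [mul_nonneg (hnrpos k).le (hτ2 g (k+1)).le]
      · rw [← add_div, div_le_div_iff_of_pos_right (hnrpos k)]
        have hMp : (0:ℝ) < max 1 (τ2 g (k+1)) := lt_of_lt_of_le one_pos (le_max_left _ _)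
        have hM : (1:ℝ) + ((k+1:ℕ):ℝ) * τ2 g (k+1) ≤ (1 + ((k+1:ℕ):ℝ)) * max 1 (τ2 g (k+1)) := by
          have h1 : (1:ℝ) ≤ max 1 (τ2 g (k+1)) := le_max_left _ _
          have h2 : τ2 g (k+1) ≤ max 1 (τ2 g (k+1)) := le_max_right _ _
          nlinarith [(hnrpos k).le]
        calc Real.log (1 + ((k+1:ℕ):ℝ) * τ2 g (k+1))
            ≤ Real.log ((1 + ((k+1:ℕ):ℝ)) * max 1 (τ2 g (k+1))) :=
              (Real.log_le_log_iff (hone g (k+1)) (by positivity)).2 hM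
        _ = Real.log (1 + ((k+1:ℕ):ℝ)) + Real.log (max 1 (τ2 g (k+1))) :=
              Real.log_mul (by positivity) hMp.ne'
        _ ≤ Real.log (1 + ((k+1:ℕ):ℝ)) + |Real.log (τ2 g (k+1))| := by
              apply add_le_add le_rfl
              rcases le_total (τ2 g (k+1)) 1 with h | h
              · rw [max_eq_left h, Real.log_one]
                exact abs_nonneg _
              · rw [max_eq_right h]
                exact le_abs_self _
    have h3rd : Tendsto (fun k : ℕ =>
        (1 - B g (k+1)) * bnorm g (X (k+1) y) ^ 2 / (2 * σ ^ 2))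
        atTop (nhds ((1 - 0) * S / (2 * σ ^ 2))) :=
      ((tendsto_const_nhds.sub hBten).mul hSlim).div_const (2 * σ ^ 2)
    have hlogdiv : Tendsto (fun k : ℕ => Real.log (Dk k) / ((k+1:ℕ):ℝ)) atTop
        (nhds (S / (2 * σ ^ 2))) := by
      have t1 : Tendsto (fun k : ℕ => Real.log (1 - π₀) / ((k+1:ℕ):ℝ)) atTop (nhds 0) :=
        (tendsto_const_div_atTop_nhds_zero_nat _).comp (tendsto_add_atTop_nat 1)
      have hall := (t1.add (hlogn.const_mul md)).add h3rd
      have hv2 : (0 + md * 0) + (1 - 0) * S / (2 * σ ^ 2) = S / (2 * σ ^ 2) := by ring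
      rw [hv2] at hall
      refine hall.congr fun k => ?_
      rw [hlogD k]
      have hnne : ((k+1:ℕ):ℝ) ≠ 0 := (hnrpos k).ne'
      field_simp
    have hκ : 0 < S / (2 * σ ^ 2) := div_pos hcpos (by positivity)
    have hlogDinf : Tendsto (fun k : ℕ => Real.log (Dk k)) atTop atTop := by
      have hev : ∀ᶠ k : ℕ in atTop, S / (2 * σ ^ 2) / 2 ≤ Real.log (Dk k) / ((k+1:ℕ):ℝ) :=
        hlogdiv.eventually_const_le (by linarith)
      have hlin : Tendsto (fun k : ℕ => S / (2 * σ ^ 2) / 2 * ((k+1:ℕ):ℝ)) atTop atTop :=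
        Tendsto.const_mul_atTop (by linarith)
          (tendsto_natCast_atTop_atTop.comp (tendsto_add_atTop_nat 1))
      apply tendsto_atTop_mono' atTop _ hlin
      filter_upwards [hev] with k hk
      have h2 := mul_le_mul_of_nonneg_right hk (hnrpos k).le
      rwa [div_mul_cancel₀ _ (hnrpos k).ne'] at h2
    have hDinf : Tendsto Dk atTop atTop :=
      (Real.tendsto_exp_atTop.comp hlogDinf).congr fun k => Real.exp_log (hDpos k)
    have hlten : Tendsto (fun k : ℕ => l g (k+1) (X (k+1) y)) atTop (nhds 0) := by
      have h1 : Tendsto (fun k : ℕ => π₀ * (π₀ + Dk k)⁻¹) atTop (nhds (π₀ * 0)) :=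
        tendsto_const_nhds.mul (tendsto_inv_atTop_zero.comp
          (tendsto_atTop_add_const_left atTop π₀ hDinf))
      rw [mul_zero] at h1
      refine h1.congr fun k => ?_
      simp only [hl, hDk, hmd, div_eq_mul_inv]
    have hlhalf : ∀ᶠ k : ℕ in atTop, l g (k+1) (X (k+1) y) < 1/2 :=
      hlten.eventually_lt_const (by norm_num)
    have hQten : Tendsto (fun k : ℕ => Q g (k+1) (X (k+1) y)) atTop (nhds 0) := by
      have hqk : ∀ k : ℕ, 1/2 < 1 / (2 * (1 - min (1/2) (l g (k+1) (X (k+1) y)))) := by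
        intro k
        have hm1 : 0 < min (1/2 : ℝ) (l g (k+1) (X (k+1) y)) :=
          lt_min (by norm_num) (hlpos g (k+1) _)
        have hm2 : min (1/2 : ℝ) (l g (k+1) (X (k+1) y)) ≤ 1/2 := min_le_left _ _
        have hden2 : 0 < 2 * (1 - min (1/2 : ℝ) (l g (k+1) (X (k+1) y))) := by linarith
        rw [div_lt_div_iff₀ two_pos hden2]
        nlinarith
      have hq2 : Tendsto (fun k : ℕ => 1 / (2 * (1 - min (1/2) (l g (k+1) (X (k+1) y)))))
          atTop (nhds (1/2)) := by
        have hct : ContinuousAt (fun t : ℝ => 1 / (2 * (1 - min (1/2) t))) 0 := by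
          apply ContinuousAt.div continuousAt_const
          · exact (continuous_const.mul (continuous_const.sub
              (continuous_const.min continuous_id))).continuousAt
          · rw [min_eq_right (by norm_num : (0:ℝ) ≤ 1/2)]
            norm_num
        have h5 := hct.tendsto.comp hlten
        simp only [Function.comp_def] at h5
        have hval : (1 : ℝ) / (2 * (1 - min (1/2 : ℝ) 0)) = 1/2 := by
          rw [min_eq_right (by norm_num : (0:ℝ) ≤ 1/2)]
          norm_num
        rwa [hval] at h5
      have h6 := tendsto_stdNormalQuantile_of hqk hq2
      exact h6.congr fun k => by rw [hQ]
    have hid : ∀ k : ℕ, Real.sqrt ((k+1:ℕ):ℝ) * (med (k+1) (X (k+1) y) i.1 - β0 i.1)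
        = Real.sqrt ((k+1:ℕ):ℝ) * (med (k+1) (X (k+1) y) i.1 - X (k+1) y i.1) + y i.1 := by
      intro k
      have h1 : X (k+1) y i.1 = β0 i.1 + (Real.sqrt ((k+1:ℕ):ℝ))⁻¹ * y i.1 := by
        simp only [hX, hc]
      rw [h1]
      have hne : Real.sqrt ((k+1:ℕ):ℝ) ≠ 0 := (hsqpos k).ne'
      field_simp
      ring
    have hrem : Tendsto (fun k : ℕ => Real.sqrt ((k+1:ℕ):ℝ) *
        (med (k+1) (X (k+1) y) i.1 - X (k+1) y i.1)) atTop (nhds 0) := by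
      have hb2 : Tendsto (fun k : ℕ => Real.sqrt (1 - B g (k+1))) atTop (nhds 1) := by
        have h0 : Tendsto (fun k : ℕ => 1 - B g (k+1)) atTop (nhds (1 - 0)) :=
          tendsto_const_nhds.sub hBten
        rw [sub_zero] at h0
        have h1 := ((Real.continuous_sqrt.continuousAt (x := (1:ℝ))).tendsto).comp h0
        simp only [Function.comp_def] at h1
        rwa [Real.sqrt_one] at h1
      have hb1 := hsB.mul (hcX i.1).abs
      rw [zero_mul] at hb1
      have hb3 := (hQten.abs.const_mul σ).mul hb2
      rw [abs_zero, mul_zero, zero_mul] at hb3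
      have hb := hb1.add hb3
      rw [add_zero] at hb
      apply squeeze_zero_norm' _ hb
      filter_upwards [hlhalf] with k hk
      have hmede : med (k+1) (X (k+1) y) i.1 = Real.sign (X (k+1) y i.1) *
          max ((1 - B g (k+1)) * |X (k+1) y i.1| -
            σ / Real.sqrt (((k+1:ℕ)):ℝ) * Q g (k+1) (X (k+1) y) * Real.sqrt (1 - B g (k+1))) 0 := by
        rw [hmed, ← hg, if_neg (not_le.2 hk)]
      have key := sign_thresh_bound (X (k+1) y i.1) (B g (k+1))
        (σ / Real.sqrt (((k+1:ℕ)):ℝ) * Q g (k+1) (X (k+1) y) * Real.sqrt (1 - B g (k+1)))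
        (hBpos g (k+1)).le (hBle g (k+1))
      have hT : Real.sqrt ((k+1:ℕ):ℝ) * |σ / Real.sqrt (((k+1:ℕ)):ℝ) * Q g (k+1) (X (k+1) y) *
          Real.sqrt (1 - B g (k+1))| = σ * |Q g (k+1) (X (k+1) y)| * Real.sqrt (1 - B g (k+1)) := by
        rw [abs_mul, abs_mul, abs_of_nonneg (Real.sqrt_nonneg (1 - B g (k+1))), abs_div,
          abs_of_pos hσ, abs_of_pos (hsqpos k)]
        have hne : Real.sqrt ((k+1:ℕ):ℝ) ≠ 0 := (hsqpos k).ne'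
        field_simp
      rw [Real.norm_eq_abs, hmede, abs_mul, abs_of_nonneg (Real.sqrt_nonneg ((k+1:ℕ):ℝ))]
      refine le_trans (mul_le_mul_of_nonneg_left key (Real.sqrt_nonneg _)) ?_
      rw [← hT]
      exact le_of_eq (by ring)
    have hcon := hrem.add (tendsto_const_nhds : Tendsto (fun _ : ℕ => y i.1) atTop (nhds (y i.1)))
    rw [zero_add] at hcon
    exact hcon.congr fun k => (hid k).symm
  have hmeas : ∀ k : ℕ, Measurable (fun y : Fin p → ℝ =>
      (fun i : {i : Fin p // ∃ i', gr i' = gr i ∧ β0 i' ≠ 0} =>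
        Real.sqrt ((k+1 : ℕ) : ℝ) * (med (k+1) (X (k+1) y) i.1 - β0 i.1))) := by
    intro k
    apply measurable_pi_lambda
    intro i
    have hXm : Measurable (X (k+1)) := by
      rw [hX]
      exact measurable_pi_lambda _ fun j => ((measurable_pi_apply j).const_mul _).const_add _
    exact (((hmedmeas (k+1) i.1).comp hXm).sub_const _).const_mul _
  have hDCT : Tendsto (fun k : ℕ => ∫ y, φ (fun i : {i : Fin p // ∃ i', gr i' = gr i ∧ β0 i' ≠ 0} =>
        Real.sqrt ((k+1 : ℕ) : ℝ) * (med (k+1) (X (k+1) y) i.1 - β0 i.1)) ∂ν) atTop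
      (nhds (∫ y, φ (fun i : {i : Fin p // ∃ i', gr i' = gr i ∧ β0 i' ≠ 0} => y i.1) ∂ν)) := by
    apply tendsto_integral_of_dominated_convergence (fun _ => ‖φ‖)
    · exact fun k => (φ.continuous.measurable.comp (hmeas k)).aestronglyMeasurable
    · exact integrable_const _
    · exact fun k => Eventually.of_forall fun y => φ.norm_coe_le_norm _
    · exact Eventually.of_forall fun y =>
        (φ.continuous.continuousAt.tendsto.comp (tendsto_pi_nhds.2 fun i => hlim_pt y i))
  have hfinal : (∫ y, φ (fun i : {i : Fin p // ∃ i', gr i' = gr i ∧ β0 i' ≠ 0} => y i.1) ∂ν)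
      = ∫ z, φ z ∂(Measure.pi
          (fun _ : {i : Fin p // ∃ i', gr i' = gr i ∧ β0 i' ≠ 0} => gaussianReal 0 v)) := by
    have hmp2 := measurePreserving_piEquivPiSubtypeProd
      (fun _ : Fin p => gaussianReal 0 v) (fun i : Fin p => ∃ i', gr i' = gr i ∧ β0 i' ≠ 0)
    have h1 := hmp2.integral_comp' (fun z => φ z.1)
    have h1' : (∫ x : Fin p → ℝ, φ (fun i : {i : Fin p // ∃ i', gr i' = gr i ∧ β0 i' ≠ 0} => x i.1)
          ∂(Measure.pi fun _ : Fin p => gaussianReal 0 v))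
        = ∫ y, φ y.1
          ∂((Measure.pi fun _ : {i : Fin p // ∃ i', gr i' = gr i ∧ β0 i' ≠ 0} => gaussianReal 0 v).prod
            (Measure.pi fun _ : {i : Fin p // ¬∃ i', gr i' = gr i ∧ β0 i' ≠ 0} => gaussianReal 0 v)) := h1
    rw [hν, h1']
    rw [← integral_map measurable_fst.aemeasurable φ.continuous.aestronglyMeasurable,
      Measure.map_fst_prod, measure_univ, one_smul]
  rw [← hfinal]
  apply (tendsto_add_atTop_iff_nat 1).1
  simp only [← hchg] at hDCT ⊢
  exact hDCT
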